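/- Let (T_n)_{n≥0} be random variables on a probability space that are almost surely nonincreasing in n and converge to 0 almost surely, and let (s_n)_{n≥0} be positive reals strictly decreasing to 0. Define Y(t) := inf{ n ≥ 0 : T_n ≤ t } and v(t) := inf{ n ≥ 0 : s_n ≤ t } for t > 0. Assume (i) the sequence (T_n/s_n) is tight on (0,∞), i.e. for every ε > 0 there exist 0 < A ≤ B such that P(A ≤ T_n/s_n ≤ B) ≥ 1 − ε for all n; and (ii) for every x > 1, s_{⌊nx⌋}/s_n → 0 as n → ∞. Then Y(t)/v(t) → 1 in probability as t → 0⁺. -/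
import Mathlib


open Filter MeasureTheory Set

set_option maxHeartbeats 1000000 in
/-- Fast regime inversion: if `(T_n/s_n)` is tight on `(0,∞)` and `s_{⌊nx⌋}/s_n → 0` for
every `x > 1`, then `Y(t)/v(t) → 1` in probability as `t → 0⁺`, where
`Y(t) = inf{n : T_n ≤ t}` and `v(t) = inf{n : s_n ≤ t}`. -/
theorem stmt10 {Ω : Type*} [MeasurableSpace Ω] (P : Measure Ω) [IsProbabilityMeasure P]
    (T : ℕ → Ω → ℝ)
    (hmono : ∀ᵐ ω ∂P, ∀ n, T (n + 1) ω ≤ T n ω)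
    (hlim : ∀ᵐ ω ∂P, Tendsto (fun n => T n ω) atTop (nhds 0))
    (s : ℕ → ℝ) (hspos : ∀ n, 0 < s n) (hsanti : StrictAnti s)
    (hs0 : Tendsto s atTop (nhds 0))
    (Y : ℝ → Ω → ℕ) (hY : ∀ t ω, Y t ω = sInf {n : ℕ | T n ω ≤ t})
    (v : ℝ → ℕ) (hv : ∀ t, v t = sInf {n : ℕ | s n ≤ t})
    (htight : ∀ ε : ℝ, 0 < ε → ∃ A B : ℝ, 0 < A ∧ A ≤ B ∧
      ∀ n, P {ω | ¬(A ≤ T n ω / s n ∧ T n ω / s n ≤ B)} ≤ ENNReal.ofReal ε)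
    (hfast : ∀ x : ℝ, 1 < x →
      Tendsto (fun n : ℕ => s ⌊(n : ℝ) * x⌋₊ / s n) atTop (nhds 0)) :
    ∀ ε > 0, Tendsto (fun t => P {ω | ε ≤ |((Y t ω : ℝ) / (v t : ℝ)) - 1|})
      (nhdsWithin 0 (Set.Ioi 0)) (nhds 0) := by
  intro ε hε
  rw [ENNReal.tendsto_nhds_zero]
  intro δ hδ
  -- pick a real δ' with ofReal δ' + ofReal δ' ≤ δ
  obtain ⟨δ', hδ'pos, hδ'⟩ : ∃ δ' : ℝ, 0 < δ' ∧
      ENNReal.ofReal δ' + ENNReal.ofReal δ' ≤ δ := by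
    rcases eq_or_ne δ ⊤ with rfl | htop
    · exact ⟨1, one_pos, le_top⟩
    · refine ⟨(δ / 2).toReal, ENNReal.toReal_pos ?_ ?_, ?_⟩
      · simpa using hδ.ne'
      · exact (ENNReal.div_lt_top htop (by norm_num)).ne
      · rw [ENNReal.ofReal_toReal (ENNReal.div_lt_top htop (by norm_num)).ne]
        exact (ENNReal.add_halves δ).le
  obtain ⟨A, B, hA, hAB, htight'⟩ := htight δ' hδ'pos
  have hBpos : 0 < B := lt_of_lt_of_le hA hAB
  -- reduce to ε' ∈ (0,1)
  set ε' : ℝ := min ε 2⁻¹ with hε'def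
  have hε'pos : 0 < ε' := lt_min hε (by norm_num)
  have hε'lt1 : ε' < 1 := lt_of_le_of_lt (min_le_right _ _) (by norm_num)
  have hε'le : ε' ≤ ε := min_le_left _ _
  set x : ℝ := 1 + ε' / 2 with hxdef
  set y : ℝ := 1 - ε' with hydef
  have hx1 : 1 < x := by simp only [hxdef]; linarith
  have hy0 : 0 < y := by simp only [hydef]; linarith
  set x' : ℝ := (y + 1) / (2 * y) with hx'def
  have hx'1 : 1 < x' := by
    rw [hx'def, lt_div_iff₀ (by linarith)]
    simp only [hydef]; nlinarith
  have hyx' : y * x' = 1 - ε' / 2 := by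
    rw [hx'def]; field_simp; simp only [hydef]; ring
  -- hfast specializations
  obtain ⟨N₁, hN₁⟩ := eventually_atTop.mp
    ((hfast x hx1).eventually_lt_const (show (0:ℝ) < 1 / B by positivity))
  obtain ⟨N₂, hN₂⟩ := eventually_atTop.mp
    ((hfast x' hx'1).eventually_lt_const (show (0:ℝ) < A / 2 by positivity))
  have hN₁' : ∀ n ≥ N₁, B * s ⌊(n : ℝ) * x⌋₊ ≤ s n := by
    intro n hn
    have h := hN₁ n hn
    rw [div_lt_div_iff₀ (hspos n) hBpos] at h
    nlinarith [hspos n, hspos ⌊(n : ℝ) * x⌋₊]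
  have hN₂' : ∀ n ≥ N₂, 2 * s ⌊(n : ℝ) * x'⌋₊ < A * s n := by
    intro n hn
    have h := (div_lt_iff₀ (hspos n)).mp (hN₂ n hn)
    nlinarith [hspos n]
  set N : ℕ := max (max N₁ 1) (max ⌈(2:ℝ) / ε'⌉₊ ⌈(N₂ : ℝ) / y⌉₊) with hNdef
  filter_upwards [Ioo_mem_nhdsGT_of_mem (left_mem_Ico.mpr (hspos N))] with t ht
  obtain ⟨ht0, htN⟩ := ht
  -- basic facts about v t
  have hSne : {n : ℕ | s n ≤ t}.Nonempty :=
    ((hs0.eventually_lt_const ht0).exists).imp (fun n hn => hn.le)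
  have hsv : s (v t) ≤ t := by rw [hv]; exact Nat.sInf_mem hSne
  have hvN : N < v t := by
    rw [hv]
    rcases Nat.sInf_mem hSne with hmem
    by_contra h
    push_neg at h
    exact absurd hmem (not_le.mpr (lt_of_lt_of_le htN (hsanti.antitone h)))
  have hv1 : 1 ≤ v t := le_trans (le_trans (le_max_right _ _) (le_max_left _ _)) hvN.le
  have hvN₁ : N₁ ≤ v t := le_trans (le_trans (le_max_left _ _) (le_max_left _ _)) hvN.le
  have hvε' : (2:ℝ) / ε' ≤ (v t : ℝ) := by
    have : ⌈(2:ℝ) / ε'⌉₊ ≤ v t :=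
      le_trans (le_trans (le_max_left _ _) (le_max_right _ _)) hvN.le
    exact le_trans (Nat.le_ceil _) (by exact_mod_cast this)
  have hvy : (N₂ : ℝ) ≤ (v t : ℝ) * y := by
    have h1 : ⌈(N₂ : ℝ) / y⌉₊ ≤ v t :=
      le_trans (le_trans (le_max_right _ _) (le_max_right _ _)) hvN.le
    have h2 : (N₂ : ℝ) / y ≤ (v t : ℝ) :=
      le_trans (Nat.le_ceil _) (by exact_mod_cast h1)
    rw [div_le_iff₀ hy0] at h2
    linarith
  have hvpos : (0:ℝ) < (v t : ℝ) := by exact_mod_cast hv1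
  have hsv1 : t < s (v t - 1) := by
    by_contra h
    push_neg at h
    have hmem : v t - 1 ∈ {n : ℕ | s n ≤ t} := h
    have := Nat.sInf_le hmem
    rw [← hv] at this
    omega
  set m₁ : ℕ := ⌊(v t : ℝ) * x⌋₊ with hm₁def
  set m₀ : ℕ := ⌊(v t : ℝ) * y⌋₊ with hm₀def
  have hm₀N₂ : N₂ ≤ m₀ := Nat.le_floor hvy
  -- the a.e. inclusion of the bad event
  have hae : ∀ᵐ ω ∂P, ω ∈ {ω | ε ≤ |((Y t ω : ℝ) / (v t : ℝ)) - 1|} →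
      ω ∈ {ω | ¬(A ≤ T m₁ ω / s m₁ ∧ T m₁ ω / s m₁ ≤ B)} ∪
        {ω | ¬(A ≤ T m₀ ω / s m₀ ∧ T m₀ ω / s m₀ ≤ B)} := by
    filter_upwards [hmono, hlim] with ω hm hl hbad
    have hTanti : Antitone (fun n => T n ω) := antitone_nat_of_succ_le hm
    have hTne : {n : ℕ | T n ω ≤ t}.Nonempty :=
      ((hl.eventually_lt_const ht0).exists).imp (fun n hn => hn.le)
    have hYmem : T (Y t ω) ω ≤ t := by rw [hY]; exact Nat.sInf_mem hTne
    have hbad' : ε' ≤ |((Y t ω : ℝ) / (v t : ℝ)) - 1| := le_trans hε'le hbad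
    rcases le_abs.mp hbad' with hup | hdown
    · -- upper deviation : Y t ω ≥ (1+ε') v t > m₁
      left
      rintro ⟨hA1, hB1⟩
      have hYge : (1 + ε') * (v t : ℝ) ≤ (Y t ω : ℝ) := by
        rw [← le_div_iff₀ hvpos]
        linarith
      have hm₁lt : (m₁ : ℝ) < (Y t ω : ℝ) := by
        calc (m₁ : ℝ) ≤ (v t : ℝ) * x := Nat.floor_le (by positivity)
          _ < (v t : ℝ) * (1 + ε') := by
              apply mul_lt_mul_of_pos_left _ hvpos
              simp only [hxdef]; linarith
          _ ≤ (Y t ω : ℝ) := by linarith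
      have hm₁lt' : m₁ < Y t ω := by exact_mod_cast hm₁lt
      have hTm₁ : T m₁ ω ≤ B * s m₁ := by
        rw [div_le_iff₀ (hspos m₁)] at hB1
        linarith
      have hle : T m₁ ω ≤ t :=
        le_trans hTm₁ (le_trans (hN₁' (v t) hvN₁) hsv)
      have : Y t ω ≤ m₁ := by rw [hY]; exact Nat.sInf_le hle
      omega
    · -- lower deviation : Y t ω ≤ (1-ε') v t = m₀ (roughly)
      right
      rintro ⟨hA1, hB1⟩
      have hYle : (Y t ω : ℝ) ≤ (v t : ℝ) * y := by
        rw [neg_sub] at hdown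
        have : (Y t ω : ℝ) / (v t : ℝ) ≤ 1 - ε' := by linarith
        rw [div_le_iff₀ hvpos] at this
        simp only [hydef]; linarith [this]
      have hYm₀ : Y t ω ≤ m₀ := Nat.le_floor hYle
      have hTm₀le : T m₀ ω ≤ t := le_trans (hTanti hYm₀) hYmem
      -- but tightness forces T m₀ ω ≥ A s m₀ > t
      have hAs : A * s m₀ ≤ T m₀ ω := by
        rw [le_div_iff₀ (hspos m₀)] at hA1
        linarith
      have hfloorle : ⌊(m₀ : ℝ) * x'⌋₊ ≤ v t - 1 := by
        have h1 : (m₀ : ℝ) ≤ (v t : ℝ) * y := Nat.floor_le (by positivity)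
        have h2 : (m₀ : ℝ) * x' ≤ (v t : ℝ) * (y * x') := by
          rw [← mul_assoc]
          exact mul_le_mul_of_nonneg_right h1 (by linarith)
        have h3 : (v t : ℝ) * (y * x') ≤ (v t : ℝ) - 1 := by
          rw [hyx']
          have h5 : (2:ℝ) ≤ (v t : ℝ) * ε' := by
            rw [div_le_iff₀ hε'pos] at hvε'
            linarith
          have h6 : (v t : ℝ) * (1 - ε' / 2) = (v t : ℝ) - ((v t : ℝ) * ε') / 2 := by ring
          linarith
        have h4 : (m₀ : ℝ) * x' ≤ ((v t - 1 : ℕ) : ℝ) := by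
          rw [Nat.cast_sub hv1]
          push_cast
          linarith
        calc ⌊(m₀ : ℝ) * x'⌋₊ ≤ ⌊((v t - 1 : ℕ) : ℝ)⌋₊ := Nat.floor_le_floor h4
          _ = v t - 1 := Nat.floor_natCast _
      have hs1 : s (v t - 1) ≤ s ⌊(m₀ : ℝ) * x'⌋₊ := hsanti.antitone hfloorle
      have hAs2 : 2 * s ⌊(m₀ : ℝ) * x'⌋₊ < A * s m₀ := hN₂' m₀ hm₀N₂
      have : t < T m₀ ω := by
        have hsp := hspos ⌊(m₀ : ℝ) * x'⌋₊
        linarith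
      linarith
  calc P {ω | ε ≤ |((Y t ω : ℝ) / (v t : ℝ)) - 1|}
      ≤ P ({ω | ¬(A ≤ T m₁ ω / s m₁ ∧ T m₁ ω / s m₁ ≤ B)} ∪
          {ω | ¬(A ≤ T m₀ ω / s m₀ ∧ T m₀ ω / s m₀ ≤ B)}) := measure_mono_ae hae
    _ ≤ P {ω | ¬(A ≤ T m₁ ω / s m₁ ∧ T m₁ ω / s m₁ ≤ B)} +
        P {ω | ¬(A ≤ T m₀ ω / s m₀ ∧ T m₀ ω / s m₀ ≤ B)} := measure_union_le _ _
    _ ≤ ENNReal.ofReal δ' + ENNReal.ofReal δ' := add_le_add (htight' m₁) (htight' m₀)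
    _ ≤ δ := hδ'
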